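/- arXiv:2502.14392 — 2 statements merged into one kernel-verified Lean document; each statement's English description precedes it below -/
import Mathlib

section
/- Suppose that (G,m) is a ℤ²⋊Cs-tight gain graph that has a vertex v₀ of degree 3 which is incident to a loop. Let G−v₀ be the gain graph obtained from (G,m) by deleting v₀ together with its incident edges (keeping the gains of the remaining edges). Then G−v₀ is ℤ²⋊Cs-tight. -/
namespace Crystal

/-- The wallpaper group `pm = ℤ² ⋊ 𝒞ₛ`.  An element is a pair of a translation
vector `t ∈ ℤ²` and a Boolean `r` recording the `𝒞ₛ`-component
(`true` = the reflection `s` in the x-axis). -/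
@[ext] structure PM : Type where
  t : ℤ × ℤ
  r : Bool

namespace PM

/-- The action of the reflection component on translation vectors. -/
def act (σ : Bool) (z : ℤ × ℤ) : ℤ × ℤ := (z.1, if σ then -z.2 else z.2)

instance : Mul PM := ⟨fun a b => ⟨a.t + act a.r b.t, xor a.r b.r⟩⟩
instance : One PM := ⟨⟨0, false⟩⟩
instance : Inv PM := ⟨fun a => ⟨act a.r (-a.t), a.r⟩⟩

lemma mul_def (a b : PM) : a * b = ⟨a.t + act a.r b.t, xor a.r b.r⟩ := rfl
lemma one_def : (1 : PM) = ⟨0, false⟩ := rfl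
lemma inv_def (a : PM) : a⁻¹ = ⟨act a.r (-a.t), a.r⟩ := rfl

instance : Group PM where
  mul_assoc a b c := by
    obtain ⟨⟨x1, x2⟩, ra⟩ := a
    obtain ⟨⟨y1, y2⟩, rb⟩ := b
    obtain ⟨⟨z1, z2⟩, rc⟩ := c
    cases ra <;> cases rb <;> cases rc <;>
      simp [mul_def, act, Prod.ext_iff] <;> omega
  one_mul a := by
    obtain ⟨⟨x1, x2⟩, ra⟩ := a
    cases ra <;> simp [mul_def, one_def, act]
  mul_one a := by
    obtain ⟨⟨x1, x2⟩, ra⟩ := a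
    cases ra <;> simp [mul_def, one_def, act]
  inv_mul_cancel a := by
    obtain ⟨⟨x1, x2⟩, ra⟩ := a
    cases ra <;> simp [mul_def, one_def, inv_def, act, Prod.ext_iff]

/-- The affine action of `pm` on the plane: `(z,σ)·x = σ(x) + z`. -/
noncomputable def toPlane (g : PM) (x : ℝ × ℝ) : ℝ × ℝ :=
  (x.1 + (g.t.1 : ℝ), (if g.r then -x.2 else x.2) + (g.t.2 : ℝ))

end PM

/-- A multigraph: a finite vertex set, a finite edge set, and two endpoint maps
(which also fix a reference orientation of every edge, from `fst` to `snd`).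
Loops and parallel edges are allowed. -/
structure Multigraph (α β : Type) where
  verts : Finset α
  edges : Finset β
  fst : β → α
  snd : β → α
  fst_mem : ∀ e ∈ edges, fst e ∈ verts
  snd_mem : ∀ e ∈ edges, snd e ∈ verts

variable {α β : Type}

/-- `H` is a subgraph of `G`. -/
def IsSubgraph (H G : Multigraph α β) : Prop :=
  H.verts ⊆ G.verts ∧ H.edges ⊆ G.edges ∧
    ∀ e ∈ H.edges, H.fst e = G.fst e ∧ H.snd e = G.snd e

/-- `(k,l)`-sparsity. -/
def Sparse (k l : ℕ) (G : Multigraph α β) : Prop :=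
  ∀ H : Multigraph α β, IsSubgraph H G → 1 ≤ H.edges.card →
    (H.edges.card : ℤ) ≤ k * H.verts.card - l

/-- `(k,l)`-tightness. -/
def Tight (k l : ℕ) (G : Multigraph α β) : Prop :=
  Sparse k l G ∧ (G.edges.card : ℤ) = k * G.verts.card - l

/-- The degree of a vertex: the number of edge-incidences, loops counting twice. -/
def Multigraph.degree [DecidableEq α] (G : Multigraph α β) (v : α) : ℕ :=
  ∑ e ∈ G.edges, ((if G.fst e = v then 1 else 0) + (if G.snd e = v then 1 else 0))

/-- The starting vertex of a step `(e, dir)` of a walk: `dir = true` means the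
edge is traversed forwards. -/
def stepHead (G : Multigraph α β) (s : β × Bool) : α := if s.2 then G.fst s.1 else G.snd s.1

/-- The final vertex of a step of a walk. -/
def stepTail (G : Multigraph α β) (s : β × Bool) : α := if s.2 then G.snd s.1 else G.fst s.1

/-- `IsWalk G u v L` : `L` is a walk in `G` from `u` to `v`. -/
def IsWalk (G : Multigraph α β) : α → α → List (β × Bool) → Prop
  | u, v, [] => u = v
  | u, v, s :: L => s.1 ∈ G.edges ∧ stepHead G s = u ∧ IsWalk G (stepTail G s) v L

/-- The net gain of a walk. -/
def walkGain (m : β → PM) (L : List (β × Bool)) : PM :=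
  (L.map fun s => if s.2 then m s.1 else (m s.1)⁻¹).prod

/-- A gain graph is balanced if every closed walk has identity net gain. -/
def Balanced (G : Multigraph α β) (m : β → PM) : Prop :=
  ∀ u L, IsWalk G u u L → walkGain m L = 1

/-- A gain graph is purely periodic if every closed walk has net gain in the
translation subgroup `ℤ²`. -/
def PurelyPeriodic (G : Multigraph α β) (m : β → PM) : Prop :=
  ∀ u L, IsWalk G u u L → (walkGain m L).r = false

/-- A multigraph is connected if every pair of its vertices is joined by a walk. -/
def Connected (G : Multigraph α β) : Prop :=
  ∀ u ∈ G.verts, ∀ v ∈ G.verts, ∃ L, IsWalk G u v L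

/-- The conditions for `m` to be a gain assignment on `G`: parallel edges with the
same orientation get distinct gains, and loops get non-identity gains. -/
structure IsGainGraph (G : Multigraph α β) (m : β → PM) : Prop where
  parallel_ne : ∀ e ∈ G.edges, ∀ f ∈ G.edges,
    e ≠ f → G.fst e = G.fst f → G.snd e = G.snd f → m e ≠ m f
  loop_ne_one : ∀ e ∈ G.edges, G.fst e = G.snd e → m e ≠ 1

/-- `ℤ²⋊𝒞ₛ`-tightness of a gain graph. -/
def PMTight (G : Multigraph α β) (m : β → PM) : Prop :=
  Tight 2 1 G ∧
    (∀ H : Multigraph α β, IsSubgraph H G → PurelyPeriodic H m → Sparse 2 2 H) ∧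
    (∀ H : Multigraph α β, IsSubgraph H G → Balanced H m → Sparse 2 3 H)

/-- The orbit rigidity matrix of a `ℤ²⋊𝒞ₛ`-gain framework. -/
noncomputable def orbitMatrix [DecidableEq α] (G : Multigraph α β) (m : β → PM)
    (p : α → ℝ × ℝ) :
    Matrix {e : β // e ∈ G.edges} ({v : α // v ∈ G.verts} × Fin 2) ℝ :=
  fun er vc =>
    let e : β := er.1
    let i : α := G.fst e
    let j : α := G.snd e
    let w : α := vc.1.1
    let entry : ℝ × ℝ :=
      if i = j then
        (if w = i then p i + p i - PM.toPlane (m e) (p i) - PM.toPlane (m e)⁻¹ (p i) else 0)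
      else if w = i then p i - PM.toPlane (m e) (p j)
      else if w = j then p j - PM.toPlane (m e)⁻¹ (p i)
      else 0
    if vc.2 = 0 then entry.1 else entry.2

/-- A configuration is generic if its orbit rigidity matrix has the maximum
possible rank among all configurations. -/
def Generic [DecidableEq α] (G : Multigraph α β) (m : β → PM) (p : α → ℝ × ℝ) : Prop :=
  ∀ q : α → ℝ × ℝ, (orbitMatrix G m q).rank ≤ (orbitMatrix G m p).rank

/-- A gain graph is rigid if the orbit rigidity matrix of a generic configuration
has rank `2|V| - 1`. -/
def Rigid [DecidableEq α] (G : Multigraph α β) (m : β → PM) : Prop :=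
  ∃ p : α → ℝ × ℝ, Generic G m p ∧
    ((orbitMatrix G m p).rank : ℤ) = 2 * G.verts.card - 1

/-- A gain graph is independent if the rows of the orbit rigidity matrix of a
generic configuration are linearly independent. -/
def Independent [DecidableEq α] (G : Multigraph α β) (m : β → PM) : Prop :=
  ∃ p : α → ℝ × ℝ, Generic G m p ∧
    LinearIndependent ℝ (fun er => orbitMatrix G m p er)

/-- A gain graph is minimally rigid if it is rigid and independent. -/
def MinimallyRigid [DecidableEq α] (G : Multigraph α β) (m : β → PM) : Prop :=
  Rigid G m ∧ Independent G m

/-- `e` joins `u` and `v` (in one of the two orientations). -/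
def Joins (G : Multigraph α β) (e : β) (u v : α) : Prop :=
  (G.fst e = u ∧ G.snd e = v) ∨ (G.fst e = v ∧ G.snd e = u)

/-- The gain of an edge read with `v` as its initial vertex (inverting the gain
if the edge is oriented towards `v`). -/
def gainFrom [DecidableEq α] (G : Multigraph α β) (m : β → PM) (v : α) (e : β) : PM :=
  if G.fst e = v then m e else (m e)⁻¹

/-- The endpoint of an edge other than `v` (for an edge incident with `v`). -/
def otherEnd [DecidableEq α] (G : Multigraph α β) (v : α) (e : β) : α :=
  if G.fst e = v then G.snd e else G.fst e

/-- Deletion of a vertex together with all edges incident with it. -/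
def Multigraph.deleteVertex [DecidableEq α] (G : Multigraph α β) (v : α) :
    Multigraph α β where
  verts := G.verts.erase v
  edges := G.edges.filter fun e => G.fst e ≠ v ∧ G.snd e ≠ v
  fst := G.fst
  snd := G.snd
  fst_mem := fun e he => by
    rw [Finset.mem_filter] at he
    exact Finset.mem_erase.2 ⟨he.2.1, G.fst_mem e he.1⟩
  snd_mem := fun e he => by
    rw [Finset.mem_filter] at he
    exact Finset.mem_erase.2 ⟨he.2.2, G.snd_mem e he.1⟩

/-- Addition of a new edge `f` from `u` to `v`. -/
def Multigraph.addEdge [DecidableEq α] [DecidableEq β] (G : Multigraph α β)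
    (f : β) (u v : α) : Multigraph α β where
  verts := insert u (insert v G.verts)
  edges := insert f G.edges
  fst := Function.update G.fst f u
  snd := Function.update G.snd f v
  fst_mem := fun e he => by
    by_cases hef : e = f
    · subst hef; simp
    · rw [Function.update_of_ne hef]
      have heG : e ∈ G.edges := by
        rcases Finset.mem_insert.1 he with h | h
        · exact absurd h hef
        · exact h
      exact Finset.mem_insert_of_mem (Finset.mem_insert_of_mem (G.fst_mem e heG))
  snd_mem := fun e he => by
    by_cases hef : e = f
    · subst hef; simp
    · rw [Function.update_of_ne hef]
      have heG : e ∈ G.edges := by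
        rcases Finset.mem_insert.1 he with h | h
        · exact absurd h hef
        · exact h
      exact Finset.mem_insert_of_mem (Finset.mem_insert_of_mem (G.snd_mem e heG))

/-- `(G',m')` is obtained from `(G,m)` by a gained 0-extension. -/
def IsZeroExtension [DecidableEq α] [DecidableEq β] (G : Multigraph α β) (m : β → PM)
    (G' : Multigraph α β) (m' : β → PM) : Prop :=
  ∃ v₀ v₁ v₂ f₁ f₂, v₀ ∉ G.verts ∧ v₁ ∈ G.verts ∧ v₂ ∈ G.verts ∧
    f₁ ∉ G.edges ∧ f₂ ∉ G.edges ∧ f₁ ≠ f₂ ∧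
    G'.verts = insert v₀ G.verts ∧ G'.edges = insert f₁ (insert f₂ G.edges) ∧
    (∀ e ∈ G.edges, G'.fst e = G.fst e ∧ G'.snd e = G.snd e ∧ m' e = m e) ∧
    Joins G' f₁ v₀ v₁ ∧ Joins G' f₂ v₀ v₂ ∧
    IsGainGraph G' m'

/-- `(G',m')` is obtained from `(G,m)` by a gained 1-extension. -/
def IsOneExtension [DecidableEq α] [DecidableEq β] (G : Multigraph α β) (m : β → PM)
    (G' : Multigraph α β) (m' : β → PM) : Prop :=
  ∃ v₀ v₃ e f₁ f₂ f₃, v₀ ∉ G.verts ∧ v₃ ∈ G.verts ∧ e ∈ G.edges ∧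
    f₁ ∉ G.edges.erase e ∧ f₂ ∉ G.edges.erase e ∧ f₃ ∉ G.edges.erase e ∧
    f₁ ≠ f₂ ∧ f₁ ≠ f₃ ∧ f₂ ≠ f₃ ∧
    G'.verts = insert v₀ G.verts ∧
    G'.edges = insert f₁ (insert f₂ (insert f₃ (G.edges.erase e))) ∧
    (∀ e' ∈ G.edges.erase e, G'.fst e' = G.fst e' ∧ G'.snd e' = G.snd e' ∧ m' e' = m e') ∧
    Joins G' f₁ v₀ (G.fst e) ∧ Joins G' f₂ v₀ (G.snd e) ∧ Joins G' f₃ v₀ v₃ ∧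
    (gainFrom G' m' v₀ f₁)⁻¹ * gainFrom G' m' v₀ f₂ = m e ∧
    IsGainGraph G' m'

/-- `(G',m')` is obtained from `(G,m)` by a gained loop-1-extension. -/
def IsLoopOneExtension [DecidableEq α] [DecidableEq β] (G : Multigraph α β) (m : β → PM)
    (G' : Multigraph α β) (m' : β → PM) : Prop :=
  ∃ v₀ v₁ l f, v₀ ∉ G.verts ∧ v₁ ∈ G.verts ∧ l ∉ G.edges ∧ f ∉ G.edges ∧ l ≠ f ∧
    G'.verts = insert v₀ G.verts ∧ G'.edges = insert l (insert f G.edges) ∧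
    (∀ e ∈ G.edges, G'.fst e = G.fst e ∧ G'.snd e = G.snd e ∧ m' e = m e) ∧
    G'.fst l = v₀ ∧ G'.snd l = v₀ ∧ (m' l).r = true ∧
    Joins G' f v₀ v₁ ∧ IsGainGraph G' m'

/-- A `ℤ²⋊𝒞ₛ`-tight gain graph on `K₁¹`: a single vertex with a single loop whose
gain has non-trivial `𝒞ₛ`-component. -/
def IsTightK11 (G : Multigraph α β) (m : β → PM) : Prop :=
  ∃ v l, G.verts = {v} ∧ G.edges = {l} ∧ G.fst l = v ∧ G.snd l = v ∧ (m l).r = true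


lemma isSubgraph_trans {H K G : Multigraph α β} (h1 : IsSubgraph H K)
    (h2 : IsSubgraph K G) : IsSubgraph H G := by
  refine ⟨h1.1.trans h2.1, h1.2.1.trans h2.2.1, fun e he => ?_⟩
  have heK : e ∈ K.edges := h1.2.1 he
  obtain ⟨a, b⟩ := h1.2.2 e he
  obtain ⟨c, d⟩ := h2.2.2 e heK
  exact ⟨a.trans c, b.trans d⟩

lemma deleteVertex_isSubgraph [DecidableEq α] (G : Multigraph α β) (v : α) :
    IsSubgraph (G.deleteVertex v) G :=
  ⟨Finset.erase_subset _ _, Finset.filter_subset _ _, fun _ _ => ⟨rfl, rfl⟩⟩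

/-- A gained loop-1-reduction at a degree-3 vertex incident to a
loop of a `ℤ²⋊𝒞ₛ`-tight gain graph yields a `ℤ²⋊𝒞ₛ`-tight gain graph. -/
theorem loopOneReduction_tight {α β : Type} [DecidableEq α]
    (G : Multigraph α β) (m : β → PM) (hGm : IsGainGraph G m) (hT : PMTight G m)
    (v₀ : α) (hv₀ : v₀ ∈ G.verts) (hdeg : G.degree v₀ = 3)
    (l : β) (hl : l ∈ G.edges) (hlf : G.fst l = v₀) (hls : G.snd l = v₀) :
    PMTight (G.deleteVertex v₀) m := by
  classical
  have hsub := deleteVertex_isSubgraph G v₀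
  obtain ⟨⟨hSp, hCount⟩, hPer, hBal⟩ := hT
  -- counting the deleted edges
  set d : β → ℕ := fun e =>
    (if G.fst e = v₀ then 1 else 0) + (if G.snd e = v₀ then 1 else 0) with hd
  set S : Finset β := G.edges.filter (fun e => G.fst e = v₀ ∨ G.snd e = v₀) with hS
  have hsumS : ∑ e ∈ S, d e = 3 := by
    rw [← hdeg]
    unfold Multigraph.degree
    rw [hS, Finset.sum_filter_of_ne]
    intro e _ he
    by_contra hcon
    push_neg at hcon
    simp only [hd, hcon.1, hcon.2, if_neg, add_zero] at he
    exact he rfl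
  have hlS : l ∈ S := by
    simp [hS, Finset.mem_filter, hl, hlf]
  have hdl : d l = 2 := by simp [hd, hlf, hls]
  have hsum_erase : ∑ e ∈ S.erase l, d e = 1 := by
    have := Finset.add_sum_erase S d hlS
    omega
  have hpos : ∀ e ∈ S.erase l, 1 ≤ d e := by
    intro e he
    have heS : e ∈ S := Finset.mem_of_mem_erase he
    rw [hS, Finset.mem_filter] at heS
    rcases heS.2 with h | h <;> simp [hd, h] <;> omega
  have hcard_le : (S.erase l).card ≤ 1 := by
    calc (S.erase l).card = ∑ _e ∈ S.erase l, 1 := by simp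
    _ ≤ ∑ e ∈ S.erase l, d e := Finset.sum_le_sum hpos
    _ = 1 := hsum_erase
  have hcard_ne : (S.erase l).card ≠ 0 := by
    intro h
    rw [Finset.card_eq_zero] at h
    rw [h, Finset.sum_empty] at hsum_erase
    exact one_ne_zero hsum_erase.symm
  have hScard : S.card = 2 := by
    have := Finset.card_erase_of_mem hlS
    have hSpos : 1 ≤ S.card := Finset.card_pos.2 ⟨l, hlS⟩
    omega
  have hEcard : (G.deleteVertex v₀).edges.card = G.edges.card - 2 := by
    have hfc : (G.deleteVertex v₀).edges
        = G.edges.filter (fun e => ¬ (G.fst e = v₀ ∨ G.snd e = v₀)) := by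
      show G.edges.filter _ = _
      apply Finset.filter_congr
      intro e _
      simp only [not_or]
    have := Finset.card_filter_add_card_filter_not
      (s := G.edges) (p := fun e => G.fst e = v₀ ∨ G.snd e = v₀)
    rw [hfc]
    rw [← hS] at this
    omega
  have hEle : 2 ≤ G.edges.card := by
    have := Finset.card_le_card (Finset.filter_subset
      (fun e => G.fst e = v₀ ∨ G.snd e = v₀) G.edges)
    rw [← hS] at this
    omega
  have hVcard : (G.deleteVertex v₀).verts.card = G.verts.card - 1 :=
    Finset.card_erase_of_mem hv₀
  have hVpos : 1 ≤ G.verts.card := Finset.card_pos.2 ⟨v₀, hv₀⟩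
  refine ⟨⟨?_, ?_⟩, ?_, ?_⟩
  · intro H hH hHe
    exact hSp H (isSubgraph_trans hH hsub) hHe
  · rw [hEcard, hVcard]
    push_cast [hEle, hVpos]
    omega
  · intro H hH hHp
    exact hPer H (isSubgraph_trans hH hsub) hHp
  · intro H hH hHb
    exact hBal H (isSubgraph_trans hH hsub) hHb

end Crystal
end

section
/- Suppose that (G,m) is a ℤ²⋊Cs-tight gain graph that has a vertex v₀ of degree 3 whose three incident edges e₁,e₂,e₃ are parallel non-loop edges joining v₀ to a single neighbour v₁ (all oriented from v₀ to v₁). Then there exist distinct indices i,j∈{1,2,3} such that the gain graph obtained from (G,m) by deleting v₀ with its incident edges and adding the loop (v₁,v₁;m(e_i)⁻¹m(e_j)) is ℤ²⋊Cs-tight. -/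
namespace Crystal

variable {α β : Type}

lemma PM.r_mul (a b : PM) : (a * b).r = xor a.r b.r := rfl
lemma PM.r_inv (a : PM) : (a⁻¹).r = a.r := rfl
lemma PM.r_one : (1 : PM).r = false := rfl

lemma walkGain_nil {β : Type} (m : β → PM) : walkGain m [] = 1 := rfl

lemma walkGain_cons {β : Type} (m : β → PM) (s : β × Bool) (L : List (β × Bool)) :
    walkGain m (s :: L) = (if s.2 then m s.1 else (m s.1)⁻¹) * walkGain m L := by
  unfold walkGain
  rw [List.map_cons, List.prod_cons]

lemma walkGain_cons_r {β : Type} (m : β → PM) (s : β × Bool) (L : List (β × Bool)) :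
    (walkGain m (s :: L)).r = xor (m s.1).r (walkGain m L).r := by
  rw [walkGain_cons]
  cases hs : s.2 <;> simp [hs, PM.r_mul, PM.r_inv]

lemma walkGain_congr {β : Type} (m m' : β → PM) (L : List (β × Bool))
    (h : ∀ s ∈ L, m' s.1 = m s.1) : walkGain m' L = walkGain m L := by
  unfold walkGain
  congr 1
  refine List.map_congr_left fun s hs => ?_
  rw [h s hs]

lemma isWalk_mem_edges {α β : Type} (H : Multigraph α β) :
    ∀ (L : List (β × Bool)) (u v : α), IsWalk H u v L → ∀ s ∈ L, s.1 ∈ H.edges := by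
  intro L
  induction L with
  | nil => intro u v _ s hs; simp at hs
  | cons a L ih =>
    intro u v hw s hs
    obtain ⟨hae, _, htail⟩ := hw
    rcases List.mem_cons.mp hs with rfl | hs
    · exact hae
    · exact ih _ _ htail s hs

/-- Parity of the reflection component of walk gains, when all edges of `H` have
the same reflection component `r₀` and `side` is a two-colouring compatible with it. -/
lemma pp_parity {α β : Type} (H : Multigraph α β) (m : β → PM) (r₀ : Bool) (side : α → Bool)
    (h : ∀ e ∈ H.edges, (m e).r = r₀ ∧ xor (side (H.fst e)) (side (H.snd e)) = r₀) :
    ∀ (L : List (β × Bool)) (u v : α), IsWalk H u v L →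
      (walkGain m L).r = (r₀ && xor (side u) (side v)) := by
  intro L
  induction L with
  | nil =>
    intro u v hw
    obtain rfl : u = v := hw
    simp [walkGain_nil, PM.r_one]
  | cons s L ih =>
    intro u v hw
    obtain ⟨hse, hhead, htail⟩ := hw
    obtain ⟨hr, hx⟩ := h s.1 hse
    have hIH := ih (stepTail H s) v htail
    have hx' : xor (side (stepHead H s)) (side (stepTail H s)) = r₀ := by
      unfold stepHead stepTail
      cases hs : s.2
      · simp only [hs, if_neg Bool.false_ne_true]
        rw [Bool.xor_comm]; exact hx
      · simpa [hs] using hx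
    subst hhead
    rw [walkGain_cons_r, hr, hIH, ← hx']
    generalize side (stepHead H s) = a
    generalize side (stepTail H s) = b
    generalize side v = c
    cases a <;> cases b <;> cases c <;> decide

/-- Main auxiliary lemma: if the gain `g` given to the new loop has non-trivial
reflection component, the reduced graph is `ℤ²⋊𝒞ₛ`-tight. -/
lemma tripleParallel_reduction_aux {α β : Type} [DecidableEq α] [DecidableEq β]
    (G : Multigraph α β) (m : β → PM) (hT : PMTight G m)
    (v₀ v₁ : α) (hv01 : v₁ ≠ v₀) (hv₀ : v₀ ∈ G.verts) (hdeg : G.degree v₀ = 3)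
    (e₁ e₂ e₃ : β) (h12 : e₁ ≠ e₂) (h13 : e₁ ≠ e₃) (h23 : e₂ ≠ e₃)
    (he₁ : e₁ ∈ G.edges) (he₂ : e₂ ∈ G.edges) (he₃ : e₃ ∈ G.edges)
    (hf₁ : G.fst e₁ = v₀) (hs₁ : G.snd e₁ = v₁)
    (hf₂ : G.fst e₂ = v₀) (hs₂ : G.snd e₂ = v₁)
    (hf₃ : G.fst e₃ = v₀) (hs₃ : G.snd e₃ = v₁)
    (g : PM) (hg : g.r = true) :
    PMTight ((G.deleteVertex v₀).addEdge e₁ v₁ v₁) (Function.update m e₁ g) := by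
  obtain ⟨⟨hSp, hCt⟩, hPP, hBal⟩ := hT
  set G' := (G.deleteVertex v₀).addEdge e₁ v₁ v₁ with hG'def
  set m' := Function.update m e₁ g with hm'def
  have hv1G : v₁ ∈ G.verts := hs₁ ▸ G.snd_mem e₁ he₁
  -- basic facts about G'
  have hE' : G'.edges = insert e₁ ((G.deleteVertex v₀).edges) := rfl
  have hfst'e₁ : G'.fst e₁ = v₁ := Function.update_self _ _ _
  have hsnd'e₁ : G'.snd e₁ = v₁ := Function.update_self _ _ _
  have hfst' : ∀ e, e ≠ e₁ → G'.fst e = G.fst e := fun e he => Function.update_of_ne he _ _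
  have hsnd' : ∀ e, e ≠ e₁ → G'.snd e = G.snd e := fun e he => Function.update_of_ne he _ _
  have hm'eq : ∀ e, e ≠ e₁ → m' e = m e := fun e he => Function.update_of_ne he _ _
  have hm'e₁ : m' e₁ = g := Function.update_self _ _ _
  have hvertsG' : G'.verts = G.verts.erase v₀ := by
    show insert v₁ (insert v₁ (G.verts.erase v₀)) = G.verts.erase v₀
    rw [Finset.insert_idem]
    exact Finset.insert_eq_self.mpr (Finset.mem_erase.mpr ⟨hv01, hv1G⟩)
  -- the set of the three parallel edges
  have hSsub : ({e₁, e₂, e₃} : Finset β) ⊆ G.edges := by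
    intro e he
    simp only [Finset.mem_insert, Finset.mem_singleton] at he
    rcases he with rfl | rfl | rfl <;> assumption
  have hScard : ({e₁, e₂, e₃} : Finset β).card = 3 := by
    rw [Finset.card_insert_of_notMem (by simp [h12, h13]),
      Finset.card_insert_of_notMem (by simp [h23]), Finset.card_singleton]
  -- any edge incident with v₀ is one of e₁, e₂, e₃
  have hinc : ∀ e ∈ G.edges, e ∉ ({e₁, e₂, e₃} : Finset β) →
      G.fst e ≠ v₀ ∧ G.snd e ≠ v₀ := by
    intro e heG heS
    have hsum : ∑ e ∈ ({e₁, e₂, e₃} : Finset β),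
        ((if G.fst e = v₀ then 1 else 0) + (if G.snd e = v₀ then 1 else 0)) = 3 := by
      rw [Finset.sum_insert (by simp [h12, h13]), Finset.sum_insert (by simp [h23]),
        Finset.sum_singleton]
      simp [hf₁, hf₂, hf₃, hs₁, hs₂, hs₃, hv01]
    have hsplit := Finset.sum_sdiff (f := fun e =>
      ((if G.fst e = v₀ then 1 else 0) + (if G.snd e = v₀ then 1 else 0))) hSsub
    unfold Multigraph.degree at hdeg
    rw [hsum, hdeg] at hsplit
    beta_reduce at hsplit
    have h0 : ∀ x ∈ G.edges \ ({e₁, e₂, e₃} : Finset β),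
        ((if G.fst x = v₀ then 1 else 0) + (if G.snd x = v₀ then 1 else 0)) = 0 := by
      refine Finset.sum_eq_zero_iff.mp ?_
      omega
    have := h0 e (Finset.mem_sdiff.mpr ⟨heG, heS⟩)
    constructor <;> intro h <;> simp [h] at this
  -- membership in the deleted graph
  have hmemD : ∀ e, e ∈ (G.deleteVertex v₀).edges ↔
      (e ∈ G.edges ∧ e ∉ ({e₁, e₂, e₃} : Finset β)) := by
    intro e
    constructor
    · intro h
      obtain ⟨heG, hnot⟩ := Finset.mem_filter.mp h
      refine ⟨heG, fun hmem => ?_⟩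
      simp only [Finset.mem_insert, Finset.mem_singleton] at hmem
      rcases hmem with rfl | rfl | rfl
      · exact hnot.1 hf₁
      · exact hnot.1 hf₂
      · exact hnot.1 hf₃
    · intro ⟨heG, heS⟩
      exact Finset.mem_filter.mpr ⟨heG, hinc e heG heS⟩
  have he₁D : e₁ ∉ (G.deleteVertex v₀).edges := fun h => by
    simp [hmemD] at h
  -- cardinalities
  have hcardD : (G.deleteVertex v₀).edges.card + 3 = G.edges.card := by
    have hDeq : (G.deleteVertex v₀).edges = G.edges \ ({e₁, e₂, e₃} : Finset β) := by
      ext e; rw [hmemD, Finset.mem_sdiff]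
    have hle := Finset.card_le_card hSsub
    rw [hDeq, Finset.card_sdiff_of_subset hSsub, hScard]
    omega
  have hcardE' : G'.edges.card + 2 = G.edges.card := by
    rw [hE', Finset.card_insert_of_notMem he₁D]
    omega
  have hcardV' : G'.verts.card + 1 = G.verts.card := by
    have := Finset.card_pos.mpr ⟨v₀, hv₀⟩
    rw [hvertsG', Finset.card_erase_of_mem hv₀]
    omega
  -- transfer: a subgraph of G' not containing e₁ is a subgraph of G
  have hsubG : ∀ H : Multigraph α β, IsSubgraph H G' → e₁ ∉ H.edges → IsSubgraph H G := by
    rintro H ⟨hV, hE, hend⟩ he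
    refine ⟨hV.trans (by rw [hvertsG']; exact Finset.erase_subset _ _), ?_, ?_⟩
    · intro e heH
      have hmem := hE heH
      rw [hE'] at hmem
      rcases Finset.mem_insert.mp hmem with rfl | hD2
      · exact absurd heH he
      · exact ((hmemD e).mp hD2).1
    · intro e heH
      have hne : e ≠ e₁ := fun h => he (h ▸ heH)
      exact ⟨(hend e heH).1.trans (hfst' e hne), (hend e heH).2.trans (hsnd' e hne)⟩
  -- gains agree on walks avoiding e₁
  have hgain : ∀ (H : Multigraph α β), e₁ ∉ H.edges → ∀ u v L, IsWalk H u v L →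
      walkGain m' L = walkGain m L := by
    intro H he u v L hw
    exact walkGain_congr m m' L fun s hs =>
      hm'eq _ (fun h => he (h ▸ isWalk_mem_edges H L u v hw s hs))
  -- the loop walk, for subgraphs containing e₁
  have hloopwalk : ∀ H : Multigraph α β, IsSubgraph H G' → e₁ ∈ H.edges →
      IsWalk H v₁ v₁ [(e₁, true)] ∧ walkGain m' [(e₁, true)] = g := by
    intro H hsub he
    have hf : H.fst e₁ = v₁ := (hsub.2.2 e₁ he).1.trans hfst'e₁
    have hs : H.snd e₁ = v₁ := (hsub.2.2 e₁ he).2.trans hsnd'e₁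
    refine ⟨⟨he, ?_, ?_⟩, ?_⟩
    · simpa [stepHead] using hf
    · show IsWalk H (stepTail H (e₁, true)) v₁ []
      show stepTail H (e₁, true) = v₁
      simpa [stepTail] using hs
    · simp [walkGain, hm'e₁]
  refine ⟨⟨?_, ?_⟩, ?_, ?_⟩
  · -- (2,1)-sparsity of G'
    intro H hsub hcard
    by_cases he : e₁ ∈ H.edges
    · -- add v₀ and the three edges back
      have hf : H.fst e₁ = v₁ := (hsub.2.2 e₁ he).1.trans hfst'e₁
      have hv1H : v₁ ∈ H.verts := hf ▸ H.fst_mem e₁ he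
      have hv0H : v₀ ∉ H.verts := fun h => by
        have := hsub.1 h
        rw [hvertsG'] at this
        exact (Finset.mem_erase.mp this).1 rfl
      have hVsub : H.verts ⊆ G.verts :=
        hsub.1.trans (by rw [hvertsG']; exact Finset.erase_subset _ _)
      have hEnot : ∀ i : β, i ∈ ({e₂, e₃} : Finset β) → i ∉ H.edges := by
        intro i hi hiH
        have hmem := hsub.2.1 hiH
        rw [hE'] at hmem
        simp only [Finset.mem_insert, Finset.mem_singleton] at hi
        rcases Finset.mem_insert.mp hmem with rfl | hD2
        · rcases hi with rfl | rfl
          · exact h12 rfl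
          · exact h13 rfl
        · have := ((hmemD i).mp hD2).2
          rcases hi with rfl | rfl <;> simp at this
      have hEsubG : H.edges.erase e₁ ⊆ G.edges := by
        intro e heE
        obtain ⟨hne, heH⟩ := Finset.mem_erase.mp heE
        have hmem := hsub.2.1 heH
        rw [hE'] at hmem
        rcases Finset.mem_insert.mp hmem with rfl | hD2
        · exact absurd rfl hne
        · exact ((hmemD e).mp hD2).1
      have hKfst : ∀ e ∈ insert e₁ (insert e₂ (insert e₃ (H.edges.erase e₁))),
          G.fst e ∈ insert v₀ H.verts := by
        intro e heK
        simp only [Finset.mem_insert] at heK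
        rcases heK with rfl | rfl | rfl | heE
        · rw [hf₁]; exact Finset.mem_insert_self _ _
        · rw [hf₂]; exact Finset.mem_insert_self _ _
        · rw [hf₃]; exact Finset.mem_insert_self _ _
        · obtain ⟨hne, heH⟩ := Finset.mem_erase.mp heE
          have : H.fst e = G.fst e := (hsub.2.2 e heH).1.trans (hfst' e hne)
          rw [← this]
          exact Finset.mem_insert_of_mem (H.fst_mem e heH)
      have hKsnd : ∀ e ∈ insert e₁ (insert e₂ (insert e₃ (H.edges.erase e₁))),
          G.snd e ∈ insert v₀ H.verts := by
        intro e heK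
        simp only [Finset.mem_insert] at heK
        rcases heK with rfl | rfl | rfl | heE
        · rw [hs₁]; exact Finset.mem_insert_of_mem hv1H
        · rw [hs₂]; exact Finset.mem_insert_of_mem hv1H
        · rw [hs₃]; exact Finset.mem_insert_of_mem hv1H
        · obtain ⟨hne, heH⟩ := Finset.mem_erase.mp heE
          have : H.snd e = G.snd e := (hsub.2.2 e heH).2.trans (hsnd' e hne)
          rw [← this]
          exact Finset.mem_insert_of_mem (H.snd_mem e heH)
      set K : Multigraph α β :=
        ⟨insert v₀ H.verts, insert e₁ (insert e₂ (insert e₃ (H.edges.erase e₁))),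
          G.fst, G.snd, hKfst, hKsnd⟩ with hKdef
      have hKsub : IsSubgraph K G := by
        refine ⟨?_, ?_, fun e _ => ⟨rfl, rfl⟩⟩
        · exact Finset.insert_subset hv₀ hVsub
        · refine Finset.insert_subset he₁ (Finset.insert_subset he₂
            (Finset.insert_subset he₃ hEsubG))
      have hKE : K.edges.card = H.edges.card + 2 := by
        show (insert e₁ (insert e₂ (insert e₃ (H.edges.erase e₁)))).card = _
        have h3 : e₃ ∉ H.edges.erase e₁ := fun h =>
          hEnot e₃ (by simp) (Finset.mem_of_mem_erase h)
        have h2 : e₂ ∉ insert e₃ (H.edges.erase e₁) := by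
          intro h
          rcases Finset.mem_insert.mp h with h | h
          · exact h23 h
          · exact hEnot e₂ (by simp) (Finset.mem_of_mem_erase h)
        have h1 : e₁ ∉ insert e₂ (insert e₃ (H.edges.erase e₁)) := by
          intro h
          rcases Finset.mem_insert.mp h with h | h
          · exact h12 h
          rcases Finset.mem_insert.mp h with h | h
          · exact h13 h
          · exact Finset.notMem_erase e₁ _ h
        rw [Finset.card_insert_of_notMem h1, Finset.card_insert_of_notMem h2,
          Finset.card_insert_of_notMem h3, Finset.card_erase_of_mem he]
        have := Finset.card_pos.mpr ⟨e₁, he⟩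
        omega
      have hKV : K.verts.card = H.verts.card + 1 := by
        show (insert v₀ H.verts).card = _
        rw [Finset.card_insert_of_notMem hv0H]
      have hKcard : 1 ≤ K.edges.card := Finset.card_pos.mpr ⟨e₁, Finset.mem_insert_self _ _⟩
      have := hSp K hKsub hKcard
      rw [hKE, hKV] at this
      push_cast at this ⊢
      omega
    · exact hSp H (hsubG H hsub he) hcard
  · -- the count
    have := hCt
    push_cast at this ⊢
    omega
  · -- purely periodic subgraphs are (2,2)-sparse
    intro H hsub hpp
    by_cases he : e₁ ∈ H.edges
    · obtain ⟨hw, hgw⟩ := hloopwalk H hsub he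
      have hc := hpp v₁ [(e₁, true)] hw
      rw [hgw, hg] at hc
      exact absurd hc (by simp)
    · refine hPP H (hsubG H hsub he) ?_
      intro u L hw
      rw [← hgain H he u u L hw]
      exact hpp u L hw
  · -- balanced subgraphs are (2,3)-sparse
    intro H hsub hbal
    by_cases he : e₁ ∈ H.edges
    · obtain ⟨hw, hgw⟩ := hloopwalk H hsub he
      have hc := hbal v₁ [(e₁, true)] hw
      rw [hgw] at hc
      rw [hc] at hg
      exact absurd hg (by simp [PM.r_one])
    · refine hBal H (hsubG H hsub he) ?_
      intro u L hw
      rw [← hgain H he u u L hw]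
      exact hbal u L hw

/-- A degree-3 vertex with a triple of parallel incident edges
admits a gained 1-reduction preserving `ℤ²⋊𝒞ₛ`-tightness. -/
theorem tripleParallel_reduction {α β : Type} [DecidableEq α] [DecidableEq β]
    (G : Multigraph α β) (m : β → PM) (hGm : IsGainGraph G m) (hT : PMTight G m)
    (v₀ v₁ : α) (hv01 : v₁ ≠ v₀) (hv₀ : v₀ ∈ G.verts) (hdeg : G.degree v₀ = 3)
    (e₁ e₂ e₃ : β) (h12 : e₁ ≠ e₂) (h13 : e₁ ≠ e₃) (h23 : e₂ ≠ e₃)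
    (he₁ : e₁ ∈ G.edges) (he₂ : e₂ ∈ G.edges) (he₃ : e₃ ∈ G.edges)
    (hf₁ : G.fst e₁ = v₀) (hs₁ : G.snd e₁ = v₁)
    (hf₂ : G.fst e₂ = v₀) (hs₂ : G.snd e₂ = v₁)
    (hf₃ : G.fst e₃ = v₀) (hs₃ : G.snd e₃ = v₁) :
    ∃ i j : Fin 3, i ≠ j ∧
      PMTight ((G.deleteVertex v₀).addEdge e₁ v₁ v₁)
        (Function.update m e₁ ((m (![e₁, e₂, e₃] i))⁻¹ * m (![e₁, e₂, e₃] j))) := by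
  -- Step 1: the three gains cannot all have the same reflection component.
  have hv1G : v₁ ∈ G.verts := hs₁ ▸ G.snd_mem e₁ he₁
  have hr3 : ¬ ((m e₂).r = (m e₁).r ∧ (m e₃).r = (m e₁).r) := by
    rintro ⟨hr2, hr3⟩
    have hmemS : ∀ e ∈ ({e₁, e₂, e₃} : Finset β), G.fst e = v₀ ∧ G.snd e = v₁ := by
      intro e he
      simp only [Finset.mem_insert, Finset.mem_singleton] at he
      rcases he with rfl | rfl | rfl <;> exact ⟨by assumption, by assumption⟩
    set H₀ : Multigraph α β :=
      ⟨{v₀, v₁}, {e₁, e₂, e₃}, G.fst, G.snd,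
        fun e he => by rw [(hmemS e he).1]; exact Finset.mem_insert_self _ _,
        fun e he => by rw [(hmemS e he).2]; simp⟩ with hH₀def
    have hsub : IsSubgraph H₀ G := by
      refine ⟨?_, ?_, fun e _ => ⟨rfl, rfl⟩⟩
      · exact Finset.insert_subset hv₀ (Finset.singleton_subset_iff.mpr hv1G)
      · intro e he
        simp only [hH₀def, Finset.mem_insert, Finset.mem_singleton] at he
        rcases he with rfl | rfl | rfl <;> assumption
    have hrr : ∀ e ∈ H₀.edges, (m e).r = (m e₁).r := by
      intro e he
      simp only [hH₀def, Finset.mem_insert, Finset.mem_singleton] at he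
      rcases he with rfl | rfl | rfl
      · rfl
      · exact hr2
      · exact hr3
    have hpp : PurelyPeriodic H₀ m := by
      intro u L hw
      cases hr₁ : (m e₁).r
      · have := pp_parity H₀ m false (fun _ => false)
          (fun e he => ⟨(hrr e he).trans hr₁, by simp⟩) L u u hw
        simpa using this
      · have := pp_parity H₀ m true (fun w => decide (w = v₁))
          (fun e he => by
            refine ⟨(hrr e he).trans hr₁, ?_⟩
            rw [show H₀.fst e = v₀ from (hmemS e he).1, show H₀.snd e = v₁ from (hmemS e he).2]
            simp [Ne.symm hv01]) L u u hw
        simpa using this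
    have hsparse := hT.2.1 H₀ hsub hpp H₀ ⟨le_refl _, le_refl _, fun e _ => ⟨rfl, rfl⟩⟩
    have hcardE : H₀.edges.card = 3 := by
      show ({e₁, e₂, e₃} : Finset β).card = 3
      rw [Finset.card_insert_of_notMem (by simp [h12, h13]),
        Finset.card_insert_of_notMem (by simp [h23]), Finset.card_singleton]
    have hcardV : H₀.verts.card = 2 := by
      show ({v₀, v₁} : Finset α).card = 2
      rw [Finset.card_insert_of_notMem (by simp [Ne.symm hv01]), Finset.card_singleton]
    have := hsparse (by omega)
    rw [hcardE, hcardV] at this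
    norm_num at this
  -- Step 2: pick a pair of indices whose gain quotient has reflection component true.
  by_cases h12r : (m e₂).r = (m e₁).r
  · -- then (m e₃).r ≠ (m e₁).r; take i = 0, j = 2
    have hne : (m e₃).r ≠ (m e₁).r := fun h => hr3 ⟨h12r, h⟩
    refine ⟨0, 2, by decide, ?_⟩
    have hidx0 : (![e₁, e₂, e₃] (0 : Fin 3)) = e₁ := rfl
    have hidx2 : (![e₁, e₂, e₃] (2 : Fin 3)) = e₃ := rfl
    rw [hidx0, hidx2]
    refine tripleParallel_reduction_aux G m hT v₀ v₁ hv01 hv₀ hdeg e₁ e₂ e₃ h12 h13 h23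
      he₁ he₂ he₃ hf₁ hs₁ hf₂ hs₂ hf₃ hs₃ _ ?_
    rw [PM.r_mul, PM.r_inv]
    revert hne
    cases (m e₁).r <;> cases (m e₃).r <;> decide
  · -- take i = 0, j = 1
    refine ⟨0, 1, by decide, ?_⟩
    have hidx0 : (![e₁, e₂, e₃] (0 : Fin 3)) = e₁ := rfl
    have hidx1 : (![e₁, e₂, e₃] (1 : Fin 3)) = e₂ := rfl
    rw [hidx0, hidx1]
    refine tripleParallel_reduction_aux G m hT v₀ v₁ hv01 hv₀ hdeg e₁ e₂ e₃ h12 h13 h23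
      he₁ he₂ he₃ hf₁ hs₁ hf₂ hs₂ hf₃ hs₃ _ ?_
    rw [PM.r_mul, PM.r_inv]
    revert h12r
    cases (m e₁).r <;> cases (m e₂).r <;> decide

end Crystal
end
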